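/- Let (x̄,σ̄) ∈ ℝⁿ × int(dom V*) be a critical point of Ξ such that A(σ̄) is positive semidefinite. Then σ̄ ∈ S_col⁺ and f(x̄) = inf_{x ∈ dom f} f(x) = Ξ(x̄,σ̄) = sup_{σ ∈ S_col⁺} D(σ) = D(σ̄); moreover, if A(σ̄) is positive definite, then x̄ is the unique global minimizer of f on dom f. -/

import Mathlib

open Matrix Set

noncomputable section

/-- The quadratic function `x ↦ ½⟨x, A x⟩ − ⟨b, x⟩ + c`. -/
def qf {n : ℕ} (A : Matrix (Fin n) (Fin n) ℝ) (b : Fin n → ℝ) (c : ℝ) (x : Fin n → ℝ) : ℝ :=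
  (1 / 2 : ℝ) * (x ⬝ᵥ A.mulVec x) - b ⬝ᵥ x + c

/-- `A(σ) = A₀ + Σ σ_k A_k`. -/
def Amat {n m : ℕ} (A0 : Matrix (Fin n) (Fin n) ℝ) (A : Fin m → Matrix (Fin n) (Fin n) ℝ)
    (σ : Fin m → ℝ) : Matrix (Fin n) (Fin n) ℝ :=
  A0 + ∑ k, σ k • A k

/-- `b(σ) = b₀ + Σ σ_k b_k`. -/
def bvec {n m : ℕ} (b0 : Fin n → ℝ) (b : Fin m → Fin n → ℝ) (σ : Fin m → ℝ) : Fin n → ℝ :=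
  b0 + ∑ k, σ k • b k

/-- `q(x) = (q₁(x), …, q_m(x))`. -/
def qvec {n m : ℕ} (A : Fin m → Matrix (Fin n) (Fin n) ℝ) (b : Fin m → Fin n → ℝ)
    (c : Fin m → ℝ) (x : Fin n → ℝ) : Fin m → ℝ :=
  fun i => qf (A i) (b i) (c i) x

/-- Subdifferential of an (extended-real-valued) convex function represented by its
finite part `V` and its effective domain `dV`; it is empty outside `dV`. -/
def subdiff {m : ℕ} (V : (Fin m → ℝ) → ℝ) (dV : Set (Fin m → ℝ)) (y : Fin m → ℝ) :
    Set (Fin m → ℝ) :=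
  {σ | y ∈ dV ∧ ∀ y' ∈ dV, (y' - y) ⬝ᵥ σ ≤ V y' - V y}

/-- `V ∈ Γ(ℝᵐ)`: proper, convex and lower semicontinuous (closed epigraph), where the
extended-real-valued function is represented by its finite part `V` on its domain `dV`. -/
def properLscConvex {m : ℕ} (V : (Fin m → ℝ) → ℝ) (dV : Set (Fin m → ℝ)) : Prop :=
  dV.Nonempty ∧ ConvexOn ℝ dV V ∧
    IsClosed {p : (Fin m → ℝ) × ℝ | p.1 ∈ dV ∧ V p.1 ≤ p.2}

/-- `(Vs, dVs)` is the Fenchel conjugate of `(V, dV)`: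
`dVs` is the set where the supremum is finite and `Vs` its value there. -/
def isConjugate {m : ℕ} (V : (Fin m → ℝ) → ℝ) (dV : Set (Fin m → ℝ))
    (Vs : (Fin m → ℝ) → ℝ) (dVs : Set (Fin m → ℝ)) : Prop :=
  dVs = {σ | BddAbove ((fun y => y ⬝ᵥ σ - V y) '' dV)} ∧
    ∀ σ ∈ dVs, Vs σ = sSup ((fun y => y ⬝ᵥ σ - V y) '' dV)

/-- The continuous linear functional `v ↦ ⟨g, v⟩`. -/
def dotCLM {k : ℕ} (g : Fin k → ℝ) : (Fin k → ℝ) →L[ℝ] ℝ :=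
  LinearMap.toContinuousLinearMap
    { toFun := fun v => g ⬝ᵥ v
      map_add' := fun u v => by simp [dotProduct_add]
      map_smul' := fun t v => by simp [dotProduct_smul, smul_eq_mul] }

/-- The continuous linear map `v ↦ M v`. -/
def matCLM {k l : ℕ} (M : Matrix (Fin l) (Fin k) ℝ) : (Fin k → ℝ) →L[ℝ] (Fin l → ℝ) :=
  LinearMap.toContinuousLinearMap M.mulVecLin

/-- `V ∈ Γ_sc(ℝᵐ)`: a proper lsc convex function of Legendre type, i.e. essentially smooth
(differentiable on the nonempty interior of its domain, with gradient `gV`, and with empty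
subdifferential outside this interior) and essentially strictly convex. -/
def LegendreType {m : ℕ} (V : (Fin m → ℝ) → ℝ) (dV : Set (Fin m → ℝ))
    (gV : (Fin m → ℝ) → (Fin m → ℝ)) : Prop :=
  (interior dV).Nonempty ∧
  (∀ y ∈ interior dV, HasFDerivAt V (dotCLM (gV y)) y) ∧
  (∀ y, y ∉ interior dV → subdiff V dV y = ∅) ∧
  StrictConvexOn ℝ (interior dV) V

lemma dotProduct_sum' {k : ℕ} {ι : Type*} (s : Finset ι) (u : Fin k → ℝ) (v : ι → Fin k → ℝ) :
    u ⬝ᵥ (∑ i ∈ s, v i) = ∑ i ∈ s, u ⬝ᵥ v i := by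
  induction s using Finset.cons_induction with
  | empty => simp
  | cons a s ha ih => rw [Finset.sum_cons, Finset.sum_cons, dotProduct_add, ih]

lemma sum_dotProduct' {k : ℕ} {ι : Type*} (s : Finset ι) (v : ι → Fin k → ℝ) (u : Fin k → ℝ) :
    (∑ i ∈ s, v i) ⬝ᵥ u = ∑ i ∈ s, v i ⬝ᵥ u := by
  induction s using Finset.cons_induction with
  | empty => simp
  | cons a s ha ih => rw [Finset.sum_cons, Finset.sum_cons, add_dotProduct, ih]

lemma sum_mulVec' {k : ℕ} {ι : Type*} (s : Finset ι) (M : ι → Matrix (Fin k) (Fin k) ℝ)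
    (x : Fin k → ℝ) : (∑ i ∈ s, M i) *ᵥ x = ∑ i ∈ s, (M i) *ᵥ x := by
  induction s using Finset.cons_induction with
  | empty => simp
  | cons a s ha ih => rw [Finset.sum_cons, Finset.sum_cons, Matrix.add_mulVec, ih]

lemma qsum {n m : ℕ} (A0 : Matrix (Fin n) (Fin n) ℝ) (A : Fin m → Matrix (Fin n) (Fin n) ℝ)
    (b0 : Fin n → ℝ) (b : Fin m → Fin n → ℝ) (c : Fin m → ℝ) (σ : Fin m → ℝ) (x : Fin n → ℝ) :
    qf A0 b0 0 x + qvec A b c x ⬝ᵥ σ =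
      (1/2 : ℝ) * (x ⬝ᵥ (Amat A0 A σ) *ᵥ x) - bvec b0 b σ ⬝ᵥ x + c ⬝ᵥ σ := by
  have h1 : x ⬝ᵥ (Amat A0 A σ) *ᵥ x
      = x ⬝ᵥ A0 *ᵥ x + ∑ k, σ k * (x ⬝ᵥ (A k) *ᵥ x) := by
    rw [Amat, Matrix.add_mulVec, dotProduct_add, sum_mulVec', dotProduct_sum']
    simp [Matrix.smul_mulVec, dotProduct_smul, smul_eq_mul]
  have h2 : bvec b0 b σ ⬝ᵥ x = b0 ⬝ᵥ x + ∑ k, σ k * ((b k) ⬝ᵥ x) := by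
    rw [bvec, add_dotProduct, sum_dotProduct']
    simp [smul_dotProduct, smul_eq_mul]
  have hq : qvec A b c x ⬝ᵥ σ
      = ∑ k, ((1/2 : ℝ)*(x ⬝ᵥ (A k) *ᵥ x) - (b k) ⬝ᵥ x + c k) * σ k := rfl
  have hc : c ⬝ᵥ σ = ∑ k, c k * σ k := rfl
  have expand : ∀ k : Fin m, ((1/2 : ℝ)*(x ⬝ᵥ (A k) *ᵥ x) - (b k) ⬝ᵥ x + c k) * σ k
      = (1/2 : ℝ)*(σ k * (x ⬝ᵥ (A k) *ᵥ x)) - σ k * ((b k) ⬝ᵥ x) + c k * σ k :=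
    fun k => by ring
  rw [h1, h2, hq, hc]
  simp only [expand, Finset.sum_add_distrib, Finset.sum_sub_distrib, ← Finset.mul_sum]
  rw [qf]
  ring


lemma symm_dot {k : ℕ} {S : Matrix (Fin k) (Fin k) ℝ} (hS : S.IsHermitian)
    (u v : Fin k → ℝ) : u ⬝ᵥ S *ᵥ v = v ⬝ᵥ S *ᵥ u := by
  have : Sᵀ = S := by
    have := hS; rwa [Matrix.IsHermitian, Matrix.conjTranspose_eq_transpose_of_trivial] at this
  rw [Matrix.dotProduct_mulVec, ← Matrix.mulVec_transpose, this, dotProduct_comm]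

lemma quad_expand {k : ℕ} {S : Matrix (Fin k) (Fin k) ℝ} (hS : S.IsHermitian)
    {xb bv : Fin k → ℝ} (hx : S *ᵥ xb = bv) (x : Fin k → ℝ) :
    (x - xb) ⬝ᵥ S *ᵥ (x - xb)
      = (x ⬝ᵥ S *ᵥ x - bv ⬝ᵥ x) - (xb ⬝ᵥ S *ᵥ xb - bv ⬝ᵥ xb) - (bv ⬝ᵥ x - bv ⬝ᵥ xb) := by
  have e1 : x ⬝ᵥ S *ᵥ xb = bv ⬝ᵥ x := by rw [hx, dotProduct_comm]
  have e2 : xb ⬝ᵥ S *ᵥ x = bv ⬝ᵥ x := by rw [symm_dot hS, e1]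
  have e3 : xb ⬝ᵥ S *ᵥ xb = bv ⬝ᵥ xb := by rw [hx, dotProduct_comm]
  have h4 : S *ᵥ (x - xb) = S *ᵥ x - S *ᵥ xb := by rw [Matrix.mulVec_sub]
  rw [h4, sub_dotProduct, dotProduct_sub, dotProduct_sub, e1, e2, e3]
  ring

lemma quadmin {k : ℕ} {S : Matrix (Fin k) (Fin k) ℝ} (hS : S.PosSemidef)
    {xb bv : Fin k → ℝ} (hx : S *ᵥ xb = bv) (x : Fin k → ℝ) :
    (1/2 : ℝ) * (xb ⬝ᵥ S *ᵥ xb) - bv ⬝ᵥ xb ≤ (1/2 : ℝ) * (x ⬝ᵥ S *ᵥ x) - bv ⬝ᵥ x := by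
  have h0 : (0:ℝ) ≤ (x - xb) ⬝ᵥ S *ᵥ (x - xb) := by simpa using hS.dotProduct_mulVec_nonneg (x - xb)
  rw [quad_expand hS.1 hx x] at h0
  have e3 : xb ⬝ᵥ S *ᵥ xb = bv ⬝ᵥ xb := by rw [hx, dotProduct_comm]
  rw [e3] at h0 ⊢
  linarith

lemma quadmin_strict {k : ℕ} {S : Matrix (Fin k) (Fin k) ℝ} (hS : S.PosDef)
    {xb bv : Fin k → ℝ} (hx : S *ᵥ xb = bv) (x : Fin k → ℝ) (hne : x ≠ xb) :
    (1/2 : ℝ) * (xb ⬝ᵥ S *ᵥ xb) - bv ⬝ᵥ xb < (1/2 : ℝ) * (x ⬝ᵥ S *ᵥ x) - bv ⬝ᵥ x := by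
  have h0 : (0:ℝ) < (x - xb) ⬝ᵥ S *ᵥ (x - xb) := by
    simpa using hS.dotProduct_mulVec_pos (sub_ne_zero.mpr hne)
  rw [quad_expand hS.1 hx x] at h0
  have e3 : xb ⬝ᵥ S *ᵥ xb = bv ⬝ᵥ xb := by rw [hx, dotProduct_comm]
  rw [e3] at h0 ⊢
  linarith


section Aux

variable {m : ℕ} {V Vs : (Fin m → ℝ) → ℝ} {dV dVs : Set (Fin m → ℝ)}

lemma fy (hV : properLscConvex V dV) (hconj : isConjugate V dV Vs dVs)
    {y σ : Fin m → ℝ} (hy : y ∈ dV) (hσ : σ ∈ dVs) : y ⬝ᵥ σ - V y ≤ Vs σ := by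
  rw [hconj.2 σ hσ]
  refine le_csSup ?_ ⟨y, hy, rfl⟩
  have := hσ; rwa [hconj.1] at this

lemma mem_dVs (hV : properLscConvex V dV) (hconj : isConjugate V dV Vs dVs)
    {σ : Fin m → ℝ} {M : ℝ} (h : ∀ y ∈ dV, y ⬝ᵥ σ - V y ≤ M) :
    σ ∈ dVs ∧ Vs σ ≤ M := by
  have hb : BddAbove ((fun y => y ⬝ᵥ σ - V y) '' dV) := by
    refine ⟨M, ?_⟩; rintro t ⟨y, hy, rfl⟩; exact h y hy
  have hm : σ ∈ dVs := by rw [hconj.1]; exact hb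
  refine ⟨hm, ?_⟩
  rw [hconj.2 σ hm]
  refine csSup_le (hV.1.image _) ?_
  rintro t ⟨y, hy, rfl⟩; exact h y hy

lemma key (hV : properLscConvex V dV) (hconj : isConjugate V dV Vs dVs)
    {σb yb : Fin m → ℝ} (hσb : σb ∈ dVs)
    (hsub : ∀ σ ∈ dVs, yb ⬝ᵥ (σ - σb) ≤ Vs σ - Vs σb) :
    yb ∈ dV ∧ V yb = yb ⬝ᵥ σb - Vs σb := by
  have main : yb ∈ dV ∧ V yb ≤ yb ⬝ᵥ σb - Vs σb := by
    by_contra hC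
    set t : ℝ := yb ⬝ᵥ σb - Vs σb with ht
    have hnot : (yb, t) ∉ {p : (Fin m → ℝ) × ℝ | p.1 ∈ dV ∧ V p.1 ≤ p.2} := by
      intro hmem; exact hC ⟨hmem.1, hmem.2⟩
    obtain ⟨f, u, hfa, hfx⟩ :=
      geometric_hahn_banach_closed_point (hV.2.1.convex_epigraph) hV.2.2 hnot
    set σφ : Fin m → ℝ := fun i => f (Pi.single i 1, 0) with hσφ
    set s : ℝ := f ((0 : Fin m → ℝ), (1:ℝ)) with hs
    have hrep : ∀ (y : Fin m → ℝ) (r : ℝ), f (y, r) = y ⬝ᵥ σφ + r * s := by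
      intro y r
      have hsplit : (y, r) = (y, (0:ℝ)) + r • ((0 : Fin m → ℝ), (1:ℝ)) := by
        simp [Prod.ext_iff]
      have hy0 : (y, (0:ℝ)) = ∑ i, y i • ((Pi.single i 1 : Fin m → ℝ), (0:ℝ)) := by
        rw [Prod.ext_iff]
        constructor
        · rw [Prod.fst_sum]
          simp only [Prod.smul_mk]
          funext j
          simp [Finset.sum_apply, Pi.single_apply, mul_ite, Finset.sum_ite_eq]
        · rw [Prod.snd_sum]; simp
      rw [hsplit, f.map_add, f.map_smul, hy0, map_sum]
      simp only [f.map_smul, smul_eq_mul]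
      rw [hσφ, hs, dotProduct]
    obtain ⟨y0, hy0⟩ := hV.1
    have hepi : ∀ y ∈ dV, ∀ r, V y ≤ r → y ⬝ᵥ σφ + r * s < u := by
      intro y hy r hr
      have := hfa (y, r) ⟨hy, hr⟩
      rwa [hrep] at this
    have hsle : s ≤ 0 := by
      by_contra hpos
      push_neg at hpos
      set r : ℝ := max (V y0) ((u - y0 ⬝ᵥ σφ) / s) with hr
      have h1 : V y0 ≤ r := le_max_left _ _
      have h2 : (u - y0 ⬝ᵥ σφ) / s ≤ r := le_max_right _ _
      have h3 : u - y0 ⬝ᵥ σφ ≤ r * s := by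
        rwa [div_le_iff₀ hpos] at h2
      have := hepi y0 hy0 r h1
      linarith
    have hxrep : u < yb ⬝ᵥ σφ + t * s := by rwa [hrep] at hfx
    rcases lt_or_eq_of_le hsle with hneg | hzero
    · -- s < 0
      set s' : ℝ := -s with hs'
      have hs'pos : 0 < s' := by simp [hs']; linarith
      set a : ℝ := s'⁻¹ with ha
      have hapos : 0 < a := inv_pos.mpr hs'pos
      have has : a * s' = 1 := inv_mul_cancel₀ (ne_of_gt hs'pos)
      set σ' : Fin m → ℝ := a • σφ with hσ'
      have hbound : ∀ y ∈ dV, y ⬝ᵥ σ' - V y ≤ u * a := by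
        intro y hy
        have h := hepi y hy (V y) le_rfl
        have hd : y ⬝ᵥ σ' = a * (y ⬝ᵥ σφ) := by
          rw [hσ', dotProduct_smul, smul_eq_mul]
        rw [hd]
        have h' : y ⬝ᵥ σφ - V y * s' < u := by rw [hs']; linarith
        have h'' := mul_lt_mul_of_pos_left h' hapos
        have e : a * (y ⬝ᵥ σφ - V y * s') = a * (y ⬝ᵥ σφ) - (a * s') * V y := by ring
        rw [e, has, one_mul] at h''
        linarith [mul_comm a u]
      obtain ⟨hmem', hVs'⟩ := mem_dVs hV hconj hbound
      have hsub' := hsub σ' hmem'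
      have hd1 : yb ⬝ᵥ (σ' - σb) = yb ⬝ᵥ σ' - yb ⬝ᵥ σb := dotProduct_sub _ _ _
      have hd2 : yb ⬝ᵥ σ' = a * (yb ⬝ᵥ σφ) := by
        rw [hσ', dotProduct_smul, smul_eq_mul]
      -- from hxrep : u < yb⬝σφ + t*s = yb⬝σφ - t*s'
      have hx' : u * a < a * (yb ⬝ᵥ σφ) - t := by
        have h' : yb ⬝ᵥ σφ - t * s' > u := by rw [hs']; linarith
        have h'' := mul_lt_mul_of_pos_left h' hapos
        have e : a * (yb ⬝ᵥ σφ - t * s') = a * (yb ⬝ᵥ σφ) - (a * s') * t := by ring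
        rw [e, has, one_mul] at h''
        linarith [mul_comm a u]
      rw [hd1, hd2] at hsub'
      linarith
    · -- s = 0
      have hz : s = 0 := hzero
      have hbound : ∀ y ∈ dV, y ⬝ᵥ (σb + σφ) - V y ≤ Vs σb + u := by
        intro y hy
        have h1 := fy hV hconj hy hσb
        have h2 := hepi y hy (V y) le_rfl
        rw [hz, mul_zero, add_zero] at h2
        rw [dotProduct_add]
        linarith
      obtain ⟨hmem', hVs'⟩ := mem_dVs hV hconj hbound
      have hsub' := hsub _ hmem'
      rw [add_sub_cancel_left] at hsub'
      rw [hz, mul_zero, add_zero] at hxrep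
      have : yb ⬝ᵥ σφ ≤ u := by linarith
      linarith
  obtain ⟨hmem, hle⟩ := main
  refine ⟨hmem, le_antisymm hle ?_⟩
  have := fy hV hconj hmem hσb
  linarith


/-- Gradient of `Vs` at a point of `dVs` is a subgradient. -/
lemma subgrad (hV : properLscConvex V dV) (hconj : isConjugate V dV Vs dVs)
    {σb g : Fin m → ℝ} (hσb : σb ∈ dVs) (hd : HasFDerivAt Vs (dotCLM g) σb) :
    ∀ σ ∈ dVs, g ⬝ᵥ (σ - σb) ≤ Vs σ - Vs σb := by
  intro σ hσ
  set d : Fin m → ℝ := σ - σb with hdd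
  -- convexity bound along the segment
  have seg : ∀ t : ℝ, 0 < t → t ≤ 1 →
      (σb + t • d) ∈ dVs ∧ Vs (σb + t • d) ≤ Vs σb + t * (Vs σ - Vs σb) := by
    intro t ht0 ht1
    have key : ∀ y ∈ dV, y ⬝ᵥ (σb + t • d) - V y ≤ Vs σb + t * (Vs σ - Vs σb) := by
      intro y hy
      have h1 : y ⬝ᵥ σb - V y ≤ Vs σb := fy hV hconj hy hσb
      have h2 : y ⬝ᵥ σ - V y ≤ Vs σ := fy hV hconj hy hσ
      have e : y ⬝ᵥ (σb + t • d) - V y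
          = (1 - t) * (y ⬝ᵥ σb - V y) + t * (y ⬝ᵥ σ - V y) := by
        rw [dotProduct_add, dotProduct_smul, hdd, dotProduct_sub]
        simp only [smul_eq_mul]; ring
      rw [e]
      have h1t : (1 - t) * (y ⬝ᵥ σb - V y) ≤ (1 - t) * Vs σb :=
        mul_le_mul_of_nonneg_left h1 (by linarith)
      have h2t : t * (y ⬝ᵥ σ - V y) ≤ t * Vs σ :=
        mul_le_mul_of_nonneg_left h2 (le_of_lt ht0)
      nlinarith
    exact mem_dVs hV hconj key
  -- derivative of t ↦ Vs (σb + t • d) at 0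
  have hcurve : HasDerivAt (fun t : ℝ => σb + t • d) d 0 := by
    simpa using ((hasDerivAt_id (0:ℝ)).smul_const d).const_add σb
  have hphi : HasDerivAt (fun t : ℝ => Vs (σb + t • d)) (g ⬝ᵥ d) 0 := by
    have hd' : HasFDerivAt Vs (dotCLM g) ((fun t : ℝ => σb + t • d) 0) := by
      simpa using hd
    have := hd'.comp_hasDerivAt (0:ℝ) hcurve
    exact (by simpa [dotCLM] using this : HasDerivAt (Vs ∘ fun t : ℝ => σb + t • d) (g ⬝ᵥ d) 0)
  have hslope := hasDerivAt_iff_tendsto_slope.mp hphi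
  have hslope' : Filter.Tendsto (slope (fun t : ℝ => Vs (σb + t • d)) 0) (nhdsWithin 0 (Set.Ioi 0))
      (nhds (g ⬝ᵥ d)) :=
    hslope.mono_left (nhdsWithin_mono _ (fun t ht => ne_of_gt ht))
  have hle : g ⬝ᵥ d ≤ Vs σ - Vs σb := by
    refine le_of_tendsto hslope' ?_
    have hev : Set.Ioc (0:ℝ) 1 ∈ nhdsWithin (0:ℝ) (Set.Ioi 0) :=
      Ioc_mem_nhdsGT_of_mem ⟨le_refl 0, one_pos⟩
    filter_upwards [hev] with t ht
    obtain ⟨ht0, ht1⟩ := ht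
    have hseg := (seg t ht0 ht1).2
    have h0 : Vs (σb + (0:ℝ) • d) = Vs σb := by norm_num
    rw [slope_def_field, h0, sub_zero, div_le_iff₀ ht0]
    calc Vs (σb + t • d) - Vs σb ≤ t * (Vs σ - Vs σb) := by linarith
      _ = (Vs σ - Vs σb) * t := mul_comm _ _
  exact hle


end Aux

/-- Let `V` be of Legendre type and `(x̄,σ̄) ∈ ℝⁿ × int(dom V*)` a critical
point of `Ξ` with `A(σ̄) ⪰ 0`. Then `σ̄ ∈ S_col⁺` and
`f(x̄) = inf_{dom f} f = Ξ(x̄,σ̄) = sup_{S_col⁺} D = D(σ̄)`; if `A(σ̄) ≻ 0`, `x̄` is the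
unique global minimizer of `f` on `dom f`. -/
theorem statement5 {n m : ℕ}
    (A0 : Matrix (Fin n) (Fin n) ℝ) (A : Fin m → Matrix (Fin n) (Fin n) ℝ)
    (b0 : Fin n → ℝ) (b : Fin m → Fin n → ℝ) (c : Fin m → ℝ)
    (hA0 : A0.IsSymm) (hA : ∀ i, (A i).IsSymm)
    (V Vs : (Fin m → ℝ) → ℝ) (dV dVs : Set (Fin m → ℝ))
    (gV gVs : (Fin m → ℝ) → (Fin m → ℝ))
    (hV : properLscConvex V dV) (hLeg : LegendreType V dV gV)
    (hconj : isConjugate V dV Vs dVs)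
    (hgVs : ∀ σ ∈ interior dVs, HasFDerivAt Vs (dotCLM (gVs σ)) σ)
    (D : (Fin m → ℝ) → ℝ)
    (hD : ∀ σ ∈ dVs, bvec b0 b σ ∈ Set.range (Amat A0 A σ).mulVec →
      ∀ x, Amat A0 A σ *ᵥ x = bvec b0 b σ →
        D σ = qf A0 b0 0 x + qvec A b c x ⬝ᵥ σ - Vs σ)
    (xb : Fin n → ℝ) (σb : Fin m → ℝ) (hσint : σb ∈ interior dVs)
    (hcrit1 : Amat A0 A σb *ᵥ xb = bvec b0 b σb)
    (hcrit2 : qvec A b c xb = gVs σb)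
    (hpsd : (Amat A0 A σb).PosSemidef) :
    σb ∈ dVs ∧ bvec b0 b σb ∈ Set.range (Amat A0 A σb).mulVec ∧
    qvec A b c xb ∈ dV ∧
    (∀ x, qvec A b c x ∈ dV →
      qf A0 b0 0 xb + V (qvec A b c xb) ≤ qf A0 b0 0 x + V (qvec A b c x)) ∧
    qf A0 b0 0 xb + V (qvec A b c xb) =
      qf A0 b0 0 xb + qvec A b c xb ⬝ᵥ σb - Vs σb ∧
    qf A0 b0 0 xb + qvec A b c xb ⬝ᵥ σb - Vs σb = D σb ∧
    (∀ σ, σ ∈ dVs → bvec b0 b σ ∈ Set.range (Amat A0 A σ).mulVec →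
      (Amat A0 A σ).PosSemidef → D σ ≤ D σb) ∧
    ((Amat A0 A σb).PosDef →
      ∀ x, qvec A b c x ∈ dV → x ≠ xb →
        qf A0 b0 0 xb + V (qvec A b c xb) < qf A0 b0 0 x + V (qvec A b c x)) := by
  
  -- notation
  have hσ : σb ∈ dVs := interior_subset hσint
  have hrange : bvec b0 b σb ∈ Set.range (Amat A0 A σb).mulVec := ⟨xb, hcrit1⟩
  -- subgradient inequality for the gradient of Vs at σb
  have hsub : ∀ σ ∈ dVs, qvec A b c xb ⬝ᵥ (σ - σb) ≤ Vs σ - Vs σb := by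
    rw [hcrit2]
    exact subgrad hV hconj hσ (hgVs σb hσint)
  obtain ⟨hydV, hVy⟩ := key hV hconj hσ hsub
  -- quadratic facts at σb
  have e2 := qsum A0 A b0 b c σb xb
  have hDb : D σb = qf A0 b0 0 xb + qvec A b c xb ⬝ᵥ σb - Vs σb :=
    hD σb hσ hrange xb hcrit1
  refine ⟨hσ, hrange, hydV, ?_, by linarith, hDb.symm, ?_, ?_⟩
  · -- global minimality
    intro x hx
    have e1 := qsum A0 A b0 b c σb x
    have fyx := fy hV hconj hx hσ
    have qm := quadmin hpsd hcrit1 x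
    linarith
  · -- weak duality: D σ ≤ D σb on S_col⁺
    intro σ hσm hrg hpsdσ
    obtain ⟨x0, hx0⟩ := hrg
    have hDσ : D σ = qf A0 b0 0 x0 + qvec A b c x0 ⬝ᵥ σ - Vs σ :=
      hD σ hσm ⟨x0, hx0⟩ x0 hx0
    have e3 := qsum A0 A b0 b c σ x0
    have e4 := qsum A0 A b0 b c σ xb
    have qm2 := quadmin hpsdσ hx0 xb
    have fy2 := fy hV hconj hydV hσm
    linarith
  · -- uniqueness under positive definiteness
    intro hpd x hx hne
    have e1 := qsum A0 A b0 b c σb x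
    have fyx := fy hV hconj hx hσ
    have qm := quadmin_strict hpd hcrit1 x hne
    linarith
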